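/- If a stochastic choice function p is rationalizable on a menu M by an MSC model whose matrix Q(M) is irreducible, then there exists a closed walk covering M such that p(·|M) is bounded in a cycle over every ordered pair appearing in the walk. -/

import Mathlib

open Finset

variable {X : Type*} [DecidableEq X]

/-- The menus relevant to an MSC model on `M`: `M` itself and the two-element subsets of `M`. -/
def RelMenu (M N : Finset X) : Prop := N = M ∨ (N ⊆ M ∧ N.card = 2)

/-- `Q` is row-stochastic on `N`: nonnegative entries, rows summing to 1. -/
def RowStochOn (N : Finset X) (Q : X → X → ℝ) : Prop :=
  (∀ i ∈ N, ∀ j ∈ N, 0 ≤ Q i j) ∧ ∀ i ∈ N, ∑ j ∈ N, Q i j = 1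

/-- The axioms of an MSC model on the menu `M`: row-stochasticity on relevant menus,
(A1) prolonged consideration, (A2) pairwise comparability on binary sets, (A3) TR-IIA. -/
def IsMSC (M : Finset X) (q : Finset X → X → X → ℝ) : Prop :=
  (∀ N, RelMenu M N → RowStochOn N (q N)) ∧
  (∀ N, RelMenu M N → ∀ i ∈ N, 0 < q N i i) ∧
  (∀ i ∈ M, ∀ j ∈ M, i ≠ j → q {i, j} i j = 0 → 0 < q {i, j} j i) ∧
  (∀ N, RelMenu M N → ∀ i ∈ N, ∀ j ∈ N, i ≠ j →
    q {i, j} i j * q N j i = q {i, j} j i * q N i j)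

/-- `p` is a stochastic choice function. -/
def IsSCF (p : Finset X → X → ℝ) : Prop :=
  ∀ N : Finset X, N.Nonempty →
    (∀ i, 0 ≤ p N i) ∧ (∀ i, i ∉ N → p N i = 0) ∧ ∑ i ∈ N, p N i = 1

/-- `σ` is a stationary (row) vector of `Q` on `N`, i.e. `σ (I - Q) = 0` on `N`. -/
def StationaryOn (N : Finset X) (Q : X → X → ℝ) (σ : X → ℝ) : Prop :=
  ∀ j ∈ N, ∑ i ∈ N, σ i * Q i j = σ j

/-- The MSC model `q` rationalizes `p` on the menu `M`. -/
def Rationalizes (M : Finset X) (q : Finset X → X → X → ℝ) (p : Finset X → X → ℝ) : Prop :=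
  IsMSC M q ∧ ∀ N, RelMenu M N → StationaryOn N (q N) (p N)

/-- The weighted difference in choice probabilities `δ_ij(M)`. -/
def delta (p : Finset X → X → ℝ) (M : Finset X) (i j : X) : ℝ :=
  p M i * p {i, j} j - p {i, j} i * p M j

/-- The set of ordered pairs of consecutive elements (with wrap-around) of a list. -/
def cyclePairs (c : List X) : List (X × X) := c.zip (c.rotate 1)

/-- `c` is a cycle of distinct alternatives lying in (a subset of) `M`. -/
def IsCycleIn (M : Finset X) (c : List X) : Prop :=
  c.Nodup ∧ 2 ≤ c.length ∧ ∀ x ∈ c, x ∈ M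

/-- All pairs of the cycle have strictly positive `δ`. -/
def PosConsistent (p : Finset X → X → ℝ) (M : Finset X) (c : List X) : Prop :=
  ∀ pr ∈ cyclePairs c, 0 < delta p M pr.1 pr.2

/-- All pairs of the cycle have strictly negative `δ`. -/
def NegConsistent (p : Finset X → X → ℝ) (M : Finset X) (c : List X) : Prop :=
  ∀ pr ∈ cyclePairs c, delta p M pr.1 pr.2 < 0

/-- `p(·|M)` is bounded in a cycle over the pair `(i, j)`. -/
def BoundedInCycle (p : Finset X → X → ℝ) (M : Finset X) (i j : X) : Prop :=
  delta p M i j = 0 ∨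
    ∃ c : List X, IsCycleIn M c ∧ (i, j) ∈ cyclePairs c ∧
      (PosConsistent p M c ∨ NegConsistent p M c)


/-- A single transition of strictly positive probability within `N`. -/
def StepIn (N : Finset X) (Q : X → X → ℝ) (i j : X) : Prop :=
  i ∈ N ∧ j ∈ N ∧ 0 < Q i j

/-- `j` can be reached from `i` by a finite sequence of strictly positive transitions in `N`. -/
def ReachIn (N : Finset X) (Q : X → X → ℝ) : X → X → Prop :=
  Relation.ReflTransGen (StepIn N Q)

/-- `i` and `j` communicate in `N` under `Q`. -/
def CommIn (N : Finset X) (Q : X → X → ℝ) (i j : X) : Prop :=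
  ReachIn N Q i j ∧ ReachIn N Q j i


set_option linter.unusedSectionVars false


/-- A walk from `a` through `l` ending at `b` along relation `r`. -/
def WalkTo (r : X → X → Prop) : X → List X → X → Prop
  | a, [], b => a = b
  | a, x :: l, b => r a x ∧ WalkTo r x l b

lemma walkTo_append {r : X → X → Prop} :
    ∀ (l1 : List X) (a b c : X) (l2 : List X),
      WalkTo r a l1 b → WalkTo r b l2 c → WalkTo r a (l1 ++ l2) c := by
  intro l1
  induction l1 with
  | nil =>
    intro a b c l2 h1 h2
    have h : a = b := h1
    subst h; exact h2
  | cons x t ih =>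
    intro a b c l2 h1 h2
    obtain ⟨h, h'⟩ := h1
    exact ⟨h, ih x b c l2 h' h2⟩

lemma exists_walkTo {r : X → X → Prop} {a b : X} (h : Relation.ReflTransGen r a b) :
    ∃ l, WalkTo r a l b := by
  induction h with
  | refl => exact ⟨[], rfl⟩
  | @tail b c _ hbc ih =>
    obtain ⟨l, hl⟩ := ih
    exact ⟨l ++ [c], walkTo_append _ _ _ _ _ hl ⟨hbc, rfl⟩⟩

lemma walkTo_zip {r : X → X → Prop} :
    ∀ (l : List X) (a b : X), WalkTo r a l b →
      ∀ pr ∈ (a :: l).zip l, r pr.1 pr.2 := by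
  intro l
  induction l with
  | nil => intro a b _ pr hpr; simp at hpr
  | cons x t ih =>
    intro a b h pr hpr
    obtain ⟨h1, h2⟩ := h
    rw [List.zip_cons_cons] at hpr
    rcases List.mem_cons.1 hpr with h | h
    · subst h; exact h1
    · exact ih x b h2 pr h

lemma walkTo_last_mem {r : X → X → Prop} :
    ∀ (l : List X) (a b : X), WalkTo r a l b → b ∈ a :: l := by
  intro l
  induction l with
  | nil => intro a b h; have : a = b := h; simp [this]
  | cons x t ih =>
    intro a b h
    exact List.mem_cons_of_mem a (ih x b h.2)

lemma walkTo_concat {r : X → X → Prop} :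
    ∀ (l : List X) (a b : X), WalkTo r a l b →
      (l = [] ∧ a = b) ∨ ∃ d, l = d ++ [b] := by
  intro l
  induction l with
  | nil => intro a b h; exact Or.inl ⟨rfl, h⟩
  | cons x t ih =>
    intro a b h
    rcases ih x b h.2 with ⟨rfl, rfl⟩ | ⟨d, hd⟩
    · exact Or.inr ⟨[], rfl⟩
    · exact Or.inr ⟨x :: d, by rw [hd]; rfl⟩

lemma walkTo_split {r : X → X → Prop} :
    ∀ (l1 : List X) (a x b : X) (l2 : List X),
      WalkTo r a (l1 ++ x :: l2) b → WalkTo r x l2 b := by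
  intro l1
  induction l1 with
  | nil => intro a x b l2 h; exact h.2
  | cons y t ih => intro a x b l2 h; exact ih y x b l2 h.2

lemma walkTo_mem {r : X → X → Prop} {M : Finset X} (hr : ∀ x y, r x y → y ∈ M) :
    ∀ (l : List X) (a b : X), WalkTo r a l b → ∀ x ∈ l, x ∈ M := by
  intro l
  induction l with
  | nil => intro a b _ x hx; simp at hx
  | cons y t ih =>
    intro a b h x hx
    rcases List.mem_cons.1 hx with rfl | hx
    · exact hr a x h.1
    · exact ih y b h.2 x hx

lemma walkTo_dedup {r : X → X → Prop} :
    ∀ (n : ℕ) (l : List X) (a b : X), l.length ≤ n → WalkTo r a l b →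
      ∃ l', WalkTo r a l' b ∧ (a :: l').Nodup ∧ ∀ x ∈ l', x ∈ l := by
  intro n
  induction n with
  | zero =>
    intro l a b hlen h
    have : l = [] := List.length_eq_zero_iff.mp (Nat.le_zero.mp hlen)
    subst this
    exact ⟨[], h, by simp, by simp⟩
  | succ n ih =>
    intro l a b hlen h
    by_cases ha : a ∈ l
    · obtain ⟨s, t, rfl⟩ := List.append_of_mem ha
      have h2 : WalkTo r a t b := walkTo_split s a a b t h
      have hlt : t.length ≤ n := by
        simp only [List.length_append, List.length_cons] at hlen; omega
      obtain ⟨l', hw, hnd, hsub⟩ := ih t a b hlt h2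
      refine ⟨l', hw, hnd, fun x hx => ?_⟩
      simp only [List.mem_append, List.mem_cons]
      exact Or.inr (Or.inr (hsub x hx))
    · cases l with
      | nil => exact ⟨[], h, by simp, by simp⟩
      | cons x t =>
        obtain ⟨h1, h2⟩ := h
        have hlen' : t.length ≤ n := by simpa using hlen
        obtain ⟨l', hw, hnd, hsub⟩ := ih t x b hlen' h2
        refine ⟨x :: l', ⟨h1, hw⟩, ?_, ?_⟩
        · refine List.nodup_cons.mpr ⟨?_, hnd⟩
          intro hmem
          rcases List.mem_cons.1 hmem with h | h
          · exact ha (h ▸ (List.mem_cons_self : x ∈ x :: t))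
          · exact ha (List.mem_cons_of_mem x (hsub a h))
        · intro y hy
          rcases List.mem_cons.1 hy with h | h
          · simp [h]
          · exact List.mem_cons_of_mem x (hsub y h)

lemma zip_append_left {α β : Type*} :
    ∀ (l1 : List α) (l2 : List β) (l3 : List α), l2.length ≤ l1.length →
      (l1 ++ l3).zip l2 = l1.zip l2 := by
  intro l1
  induction l1 with
  | nil =>
    intro l2 l3 h
    have : l2 = [] := List.length_eq_zero_iff.mp (Nat.le_zero.mp h)
    simp [this]
  | cons x t ih =>
    intro l2 l3 h
    cases l2 with
    | nil => simp
    | cons y s =>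
      simp only [List.cons_append, List.zip_cons_cons]
      rw [ih s l3 (by simpa using h)]

lemma cyclePairs_eq_zip (a : X) (l : List X) :
    cyclePairs (a :: l) = (a :: l).zip (l ++ [a]) := by
  unfold cyclePairs
  rw [List.rotate_cons_succ, List.rotate_zero]

lemma cyclePairs_closed (a : X) (d : List X) :
    cyclePairs (a :: (d ++ [a])) = (a :: (d ++ [a])).zip (d ++ [a]) ++ [(a, a)] := by
  rw [cyclePairs_eq_zip]
  have h1 : (a :: (d ++ [a])) = (a :: d) ++ [a] := by simp
  rw [h1]
  rw [List.zip_append (by simp)]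
  rw [zip_append_left (a :: d) (d ++ [a]) [a] (by simp)]
  simp

lemma cyclePairs_flowcycle (i0 j0 : X) (d : List X) :
    cyclePairs (i0 :: j0 :: d) = (i0, j0) :: (j0 :: (d ++ [i0])).zip (d ++ [i0]) := by
  rw [cyclePairs_eq_zip]
  have h1 : (j0 :: d) ++ [i0] = j0 :: (d ++ [i0]) := by simp
  rw [h1, List.zip_cons_cons]
  congr 1
  have h2 : (j0 :: (d ++ [i0])) = (j0 :: d) ++ [i0] := by simp
  rw [h2, zip_append_left (j0 :: d) (d ++ [i0]) [i0] (by simp)]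

lemma delta_self (p : Finset X → X → ℝ) (M : Finset X) (x : X) : delta p M x x = 0 := by
  unfold delta; ring

lemma reach_back {M : Finset X} (f : X → X → ℝ)
    (hanti : ∀ i j, f i j = - f j i)
    (hdiv : ∀ j ∈ M, ∑ i ∈ M, f i j = 0)
    {i0 j0 : X} (hi0 : i0 ∈ M) (hj0 : j0 ∈ M) (hpos : 0 < f i0 j0) :
    Relation.ReflTransGen (fun x y => x ∈ M ∧ y ∈ M ∧ 0 < f x y) j0 i0 := by
  classical
  by_contra hcon
  set r : X → X → Prop := fun x y => x ∈ M ∧ y ∈ M ∧ 0 < f x y with hr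
  set S : Finset X := M.filter (fun x => Relation.ReflTransGen r j0 x) with hS
  have hj0S : j0 ∈ S := Finset.mem_filter.2 ⟨hj0, Relation.ReflTransGen.refl⟩
  have hi0S : i0 ∉ S := fun h => hcon (Finset.mem_filter.1 h).2
  have hSM : S ⊆ M := Finset.filter_subset _ _
  -- inner antisymmetric double sum is zero
  have hTT : ∑ j ∈ S, ∑ i ∈ S, f i j = 0 := by
    have h1 : ∑ j ∈ S, ∑ i ∈ S, f i j = - ∑ j ∈ S, ∑ i ∈ S, f i j := by
      conv_lhs =>
        rw [show (∑ j ∈ S, ∑ i ∈ S, f i j) = ∑ j ∈ S, ∑ i ∈ S, -(f j i) from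
          Finset.sum_congr rfl fun j _ => Finset.sum_congr rfl fun i _ => hanti i j]
      rw [show (∑ j ∈ S, ∑ i ∈ S, -(f j i)) = -(∑ j ∈ S, ∑ i ∈ S, f j i) by
        simp [Finset.sum_neg_distrib]]
      rw [Finset.sum_comm]
    linarith
  -- total divergence over S
  have htot : ∑ j ∈ S, ∑ i ∈ M, f i j = 0 :=
    Finset.sum_eq_zero fun j hj => hdiv j (hSM hj)
  have hsplit : ∀ j ∈ S, ∑ i ∈ M, f i j = ∑ i ∈ M \ S, f i j + ∑ i ∈ S, f i j :=
    fun j _ => (Finset.sum_sdiff hSM).symm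
  have hB : ∑ j ∈ S, ∑ i ∈ M \ S, f i j = 0 := by
    have : ∑ j ∈ S, ∑ i ∈ M, f i j
        = ∑ j ∈ S, ∑ i ∈ M \ S, f i j + ∑ j ∈ S, ∑ i ∈ S, f i j := by
      rw [← Finset.sum_add_distrib]
      exact Finset.sum_congr rfl hsplit
    rw [htot, hTT] at this
    linarith
  -- each term is nonneg
  have hterm : ∀ j ∈ S, ∀ i ∈ M \ S, 0 ≤ f i j := by
    intro j hj i hi
    by_contra hneg
    push_neg at hneg
    have hfji : 0 < f j i := by rw [hanti i j] at hneg; linarith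
    obtain ⟨hiM, hiS⟩ := Finset.mem_sdiff.1 hi
    have hrji : r j i := ⟨hSM hj, hiM, hfji⟩
    have : Relation.ReflTransGen r j0 i :=
      Relation.ReflTransGen.tail (Finset.mem_filter.1 hj).2 hrji
    exact hiS (Finset.mem_filter.2 ⟨hiM, this⟩)
  have hBpos : 0 < ∑ j ∈ S, ∑ i ∈ M \ S, f i j := by
    apply Finset.sum_pos'
    · intro j hj
      exact Finset.sum_nonneg fun i hi => hterm j hj i hi
    · refine ⟨j0, hj0S, ?_⟩
      apply Finset.sum_pos'
      · intro i hi; exact hterm j0 hj0S i hi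
      · exact ⟨i0, Finset.mem_sdiff.2 ⟨hi0, hi0S⟩, hpos⟩
  linarith

lemma flow_cycle {M : Finset X} (f : X → X → ℝ)
    (hanti : ∀ i j, f i j = - f j i)
    (hdiv : ∀ j ∈ M, ∑ i ∈ M, f i j = 0)
    {i0 j0 : X} (hi0 : i0 ∈ M) (hj0 : j0 ∈ M) (hpos : 0 < f i0 j0) :
    ∃ c : List X, c.Nodup ∧ 2 ≤ c.length ∧ (∀ x ∈ c, x ∈ M) ∧
      (i0, j0) ∈ cyclePairs c ∧
      ∀ pr ∈ cyclePairs c, pr.1 ∈ M ∧ pr.2 ∈ M ∧ 0 < f pr.1 pr.2 := by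
  classical
  set r : X → X → Prop := fun x y => x ∈ M ∧ y ∈ M ∧ 0 < f x y with hr
  have hreach := reach_back f hanti hdiv hi0 hj0 hpos
  obtain ⟨l0, hw0⟩ := exists_walkTo hreach
  obtain ⟨l, hw, hnd, hsub⟩ := walkTo_dedup l0.length l0 j0 i0 le_rfl hw0
  have hne : i0 ≠ j0 := by
    intro h
    subst h
    have : f i0 i0 = - f i0 i0 := hanti i0 i0
    linarith
  have hlM : ∀ x ∈ l, x ∈ M := walkTo_mem (fun x y h => h.2.1) l j0 i0 hw
  rcases walkTo_concat l j0 i0 hw with ⟨rfl, h⟩ | ⟨d, rfl⟩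
  · exact absurd h.symm hne
  refine ⟨i0 :: j0 :: d, ?_, by simp, ?_, ?_, ?_⟩
  · -- Nodup
    have h1 : j0 ∉ d ++ [i0] := (List.nodup_cons.1 hnd).1
    have h2 : (d ++ [i0]).Nodup := (List.nodup_cons.1 hnd).2
    have hdn : d.Nodup := h2.of_append_left
    have hi0d : i0 ∉ d := by
      have hdisj := List.disjoint_of_nodup_append h2
      intro h
      exact hdisj h (by simp)
    refine List.nodup_cons.2 ⟨?_, List.nodup_cons.2 ⟨?_, hdn⟩⟩
    · intro h
      rcases List.mem_cons.1 h with h | h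
      · exact hne h
      · exact hi0d h
    · intro h
      exact h1 (List.mem_append_left _ h)
  · intro x hx
    rcases List.mem_cons.1 hx with rfl | hx
    · exact hi0
    rcases List.mem_cons.1 hx with rfl | hx
    · exact hj0
    · exact hlM x (by simp [hx])
  · rw [cyclePairs_flowcycle]
    exact List.mem_cons_self
  · rw [cyclePairs_flowcycle]
    intro pr hpr
    rcases List.mem_cons.1 hpr with rfl | hpr
    · exact ⟨hi0, hj0, hpos⟩
    · exact walkTo_zip (d ++ [i0]) j0 i0 hw pr hpr

lemma sign_key {M : Finset X} {p : Finset X → X → ℝ} {q : Finset X → X → X → ℝ}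
    (hp : IsSCF p) (hrat : Rationalizes M q p)
    {i j : X} (hi : i ∈ M) (hj : j ∈ M) (hij : i ≠ j)
    (hQ : 0 < q M i j ∨ 0 < q M j i) :
    ∃ m1 m2 : ℝ, 0 < m1 ∧ 0 < m2 ∧
      delta p M i j * m1 = m2 * (p M i * q M i j - p M j * q M j i) := by
  obtain ⟨⟨hrow, hA1, hA2, hA3⟩, hstat⟩ := hrat
  have hiP : i ∈ ({i, j} : Finset X) := by simp
  have hjP : j ∈ ({i, j} : Finset X) := by simp
  have hpairrel : RelMenu M ({i, j} : Finset X) := by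
    refine Or.inr ⟨?_, Finset.card_pair hij⟩
    intro x hx
    rcases Finset.mem_insert.1 hx with rfl | hx
    · exact hi
    · exact (Finset.mem_singleton.1 hx) ▸ hj
  have hMrel : RelMenu M M := Or.inl rfl
  have hae : 0 ≤ q {i, j} i j := (hrow _ hpairrel).1 i hiP j hjP
  have hbe : 0 ≤ q {i, j} j i := (hrow _ hpairrel).1 j hjP i hiP
  have hQijN : 0 ≤ q M i j := (hrow M hMrel).1 i hi j hj
  have hQjiN : 0 ≤ q M j i := (hrow M hMrel).1 j hj i hi
  obtain ⟨hpn, _, hps⟩ := hp {i, j} ⟨i, hiP⟩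
  have hsum : p {i, j} i + p {i, j} j = 1 := by rwa [Finset.sum_pair hij] at hps
  have hrowj : q {i, j} j i + q {i, j} j j = 1 := by
    have := (hrow _ hpairrel).2 j hjP
    rwa [Finset.sum_pair hij] at this
  have hstp := hstat _ hpairrel j hjP
  rw [Finset.sum_pair hij] at hstp
  have R1 : p {i, j} i * q {i, j} i j = p {i, j} j * q {i, j} j i := by
    linear_combination hstp - p {i, j} j * hrowj
  have R2 : q {i, j} i j * q M j i = q {i, j} j i * q M i j := hA3 M hMrel i hi j hj hij
  have hA2' : q {i, j} i j = 0 → 0 < q {i, j} j i := hA2 i hi j hj hij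
  have hm2 : 0 < p {i, j} i * q {i, j} j i + p {i, j} j * q {i, j} i j := by
    rcases eq_or_lt_of_le hae with ha0 | hapos
    · have hb := hA2' ha0.symm
      have hpj : p {i, j} j = 0 := by nlinarith [hpn j, R1]
      have hpi : p {i, j} i = 1 := by linarith
      rw [hpi, hpj, ← ha0]
      linarith
    · rcases eq_or_lt_of_le hbe with hb0 | hbpos
      · have hpi : p {i, j} i = 0 := by nlinarith [hpn i, R1]
        have hpj : p {i, j} j = 1 := by linarith
        rw [hpi, hpj, ← hb0]
        linarith
      · rcases eq_or_lt_of_le (hpn i) with hpi0 | hpip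
        · have hpj : p {i, j} j = 1 := by linarith
          have hterm : p {i, j} j * q {i, j} i j = q {i, j} i j := by rw [hpj, one_mul]
          have hnn : 0 ≤ p {i, j} i * q {i, j} j i := mul_nonneg (hpn i) hbpos.le
          linarith
        · have := mul_pos hpip hbpos
          have hnn : 0 ≤ p {i, j} j * q {i, j} i j := mul_nonneg (hpn j) hapos.le
          linarith
  have hm1 : 0 < q {i, j} i j * q M i j + q {i, j} j i * q M j i := by
    rcases hQ with hQij | hQji
    · have hapos : 0 < q {i, j} i j := by
        rcases eq_or_lt_of_le hae with ha0 | hapos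
        · exfalso
          have hb := hA2' ha0.symm
          nlinarith [R2]
        · exact hapos
      nlinarith [mul_pos hapos hQij, mul_nonneg hbe hQjiN]
    · have hbpos : 0 < q {i, j} j i := by
        rcases eq_or_lt_of_le hbe with hb0 | hbpos
        · exfalso
          have hapos : 0 < q {i, j} i j := by
            rcases eq_or_lt_of_le hae with ha0 | h
            · exact absurd (hA2' ha0.symm) (by rw [← hb0]; exact lt_irrefl 0)
            · exact h
          nlinarith [R2]
        · exact hbpos
      nlinarith [mul_pos hbpos hQji, mul_nonneg hae hQijN]
  refine ⟨_, _, hm1, hm2, ?_⟩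
  unfold delta
  linear_combination (-(p M i * q M j i + p M j * q M i j)) * R1 +
    (p M i * p {i, j} i + p M j * p {i, j} j) * R2

lemma exists_cover {M : Finset X} {Q : X → X → ℝ}
    (hirr : ∀ i ∈ M, ∀ j ∈ M, ReachIn M Q i j) :
    ∀ (ts : List X), (∀ t ∈ ts, t ∈ M) → ∀ a, a ∈ M →
      ∃ l, WalkTo (StepIn M Q) a l a ∧ ∀ t ∈ ts, t ∈ a :: l := by
  intro ts
  induction ts with
  | nil => intro _ a _; exact ⟨[], rfl, by simp⟩
  | cons t rest ih =>
    intro hts a ha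
    obtain ⟨l1, hw1, hmem1⟩ := ih (fun x hx => hts x (List.mem_cons_of_mem _ hx)) a ha
    have ht : t ∈ M := hts t List.mem_cons_self
    obtain ⟨l2, hw2⟩ := exists_walkTo (hirr a ha t ht)
    obtain ⟨l3, hw3⟩ := exists_walkTo (hirr t ht a ha)
    refine ⟨l2 ++ (l3 ++ l1),
      walkTo_append _ _ _ _ _ hw2 (walkTo_append _ _ _ _ _ hw3 hw1), ?_⟩
    intro x hx
    rcases List.mem_cons.1 hx with rfl | hx
    · have := walkTo_last_mem l2 a x hw2
      rcases List.mem_cons.1 this with h | h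
      · simp [h]
      · exact List.mem_cons_of_mem _ (by simp [h])
    · have := hmem1 x hx
      rcases List.mem_cons.1 this with h | h
      · simp [h]
      · exact List.mem_cons_of_mem _ (by simp [h])

/-- If `p` is rationalizable on `M` by an MSC model whose matrix `Q(M)` is irreducible,
then there is a closed walk covering `M` such that `p(·|M)` is bounded in a cycle over
every ordered pair appearing in the walk. -/
theorem stmt14 (M : Finset X) (hM : M.Nonempty)
    (p : Finset X → X → ℝ) (hp : IsSCF p)
    (q : Finset X → X → X → ℝ) (hrat : Rationalizes M q p)
    (hirr : ∀ i ∈ M, ∀ j ∈ M, ReachIn M (q M) i j) :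
    ∃ c : List X, c ≠ [] ∧ c.toFinset = M ∧
      ∀ pr ∈ cyclePairs c, BoundedInCycle p M pr.1 pr.2 := by
  classical
  obtain ⟨a, ha⟩ := hM
  have hMrel : RelMenu M M := Or.inl rfl
  have hrow := hrat.1.1
  have hstatM := hrat.2 M hMrel
  -- the flow and its divergence
  set f : X → X → ℝ := fun x y => p M x * q M x y - p M y * q M y x with hf
  have hanti : ∀ x y, f x y = - f y x := by intro x y; simp only [hf]; ring
  have hdiv : ∀ j ∈ M, ∑ i ∈ M, f i j = 0 := by
    intro j hj
    simp only [hf]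
    rw [Finset.sum_sub_distrib]
    have h1 : ∑ i ∈ M, p M i * q M i j = p M j := hstatM j hj
    have h2 : ∑ i ∈ M, p M j * q M j i = p M j := by
      rw [← Finset.mul_sum, (hrow M hMrel).2 j hj, mul_one]
    rw [h1, h2, sub_self]
  have hpMn : ∀ x, 0 ≤ p M x := (hp M ⟨a, ha⟩).1
  have hQn : ∀ i ∈ M, ∀ j ∈ M, 0 ≤ q M i j := (hrow M hMrel).1
  -- Q-positivity from positive flow
  have hQpos_of_f : ∀ x ∈ M, ∀ y ∈ M, 0 < f x y → 0 < q M x y := by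
    intro x hx y hy hfxy
    simp only [hf] at hfxy
    nlinarith [hpMn x, hpMn y, hQn x hx y hy, hQn y hy x hx,
      mul_nonneg (hpMn y) (hQn y hy x hx)]
  have hne_of_f : ∀ x y, 0 < f x y → x ≠ y := by
    intro x y hfxy h
    subst h
    have : f x x = - f x x := hanti x x
    linarith
  -- the key per-pair result for any pair with a positive transition
  have key : ∀ x ∈ M, ∀ y ∈ M, x ≠ y → (0 < q M x y ∨ 0 < q M y x) →
      (f x y = 0 → delta p M x y = 0) ∧
      (0 < f x y → 0 < delta p M x y) ∧
      (f x y < 0 → delta p M x y < 0) := by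
    intro x hx y hy hxy hQ
    obtain ⟨m1, m2, hm1, hm2, hid⟩ := sign_key hp hrat hx hy hxy hQ
    have hfid : delta p M x y * m1 = m2 * f x y := by rw [hid]
    refine ⟨?_, ?_, ?_⟩
    · intro h0; rw [h0, mul_zero] at hfid; nlinarith
    · intro hpos
      have : 0 < m2 * f x y := mul_pos hm2 hpos
      nlinarith
    · intro hneg
      have : m2 * f x y < 0 := mul_neg_of_pos_of_neg hm2 hneg
      nlinarith
  -- bounded in a cycle for any positive-transition pair
  have bound : ∀ x ∈ M, ∀ y ∈ M, 0 < q M x y → BoundedInCycle p M x y := by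
    intro x hx y hy hQxy
    by_cases hxy : x = y
    · subst hxy; exact Or.inl (delta_self p M x)
    rcases lt_trichotomy (f x y) 0 with hneg | hzero | hpos
    · -- use reversed flow
      right
      have hgpos : 0 < (fun u v => f v u) x y := by
        simp only
        rw [hanti y x]
        linarith
      obtain ⟨c, hnd, hlen, hmem, hpr, hall⟩ :=
        flow_cycle (fun u v => f v u)
          (fun u v => hanti v u)
          (fun j hj => by
            have : ∑ i ∈ M, f j i = - ∑ i ∈ M, f i j := by
              rw [← Finset.sum_neg_distrib]
              exact Finset.sum_congr rfl fun i _ => hanti j i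
            rw [this, hdiv j hj, neg_zero])
          hx hy hgpos
      refine ⟨c, ⟨hnd, hlen, hmem⟩, hpr, Or.inr ?_⟩
      intro pr hprc
      obtain ⟨h1M, h2M, hfpr⟩ := hall pr hprc
      -- f pr.2 pr.1 > 0
      have hQ21 : 0 < q M pr.2 pr.1 := hQpos_of_f pr.2 h2M pr.1 h1M hfpr
      have hne' : pr.1 ≠ pr.2 := fun h => (hne_of_f pr.2 pr.1 hfpr) h.symm
      have hf12 : f pr.1 pr.2 < 0 := by rw [hanti pr.1 pr.2]; linarith
      exact ((key pr.1 h1M pr.2 h2M hne' (Or.inr hQ21)).2.2) hf12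
    · exact Or.inl (((key x hx y hy hxy (Or.inl hQxy)).1) hzero)
    · right
      obtain ⟨c, hnd, hlen, hmem, hpr, hall⟩ := flow_cycle f hanti hdiv hx hy hpos
      refine ⟨c, ⟨hnd, hlen, hmem⟩, hpr, Or.inl ?_⟩
      intro pr hprc
      obtain ⟨h1M, h2M, hfpr⟩ := hall pr hprc
      have hQ12 : 0 < q M pr.1 pr.2 := hQpos_of_f pr.1 h1M pr.2 h2M hfpr
      have hne' : pr.1 ≠ pr.2 := hne_of_f pr.1 pr.2 hfpr
      exact ((key pr.1 h1M pr.2 h2M hne' (Or.inl hQ12)).2.1) hfpr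
  -- build the covering closed walk
  obtain ⟨l, hw, hcov⟩ :=
    exists_cover hirr M.toList (fun t ht => Finset.mem_toList.1 ht) a ha
  have hlM : ∀ x ∈ l, x ∈ M :=
    walkTo_mem (fun x y (h : StepIn M (q M) x y) => h.2.1) l a a hw
  refine ⟨a :: l, by simp, ?_, ?_⟩
  · ext x
    simp only [List.toFinset_cons, Finset.mem_insert, List.mem_toFinset]
    constructor
    · rintro (rfl | hx)
      · exact ha
      · exact hlM x hx
    · intro hx
      have := hcov x (Finset.mem_toList.2 hx)
      rcases List.mem_cons.1 this with h | h
      · exact Or.inl h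
      · exact Or.inr h
  · intro pr hpr
    rcases walkTo_concat l a a hw with ⟨rfl, _⟩ | ⟨d, rfl⟩
    · -- l = [], c = [a]
      have : cyclePairs [a] = [(a, a)] := by
        unfold cyclePairs
        rw [List.rotate_cons_succ, List.rotate_zero]
        simp
      rw [this] at hpr
      rcases List.mem_cons.1 hpr with rfl | h
      · exact Or.inl (delta_self p M a)
      · simp at h
    · rw [cyclePairs_closed] at hpr
      rcases List.mem_append.1 hpr with hpr | hpr
      · have hstep : StepIn M (q M) pr.1 pr.2 := walkTo_zip (d ++ [a]) a a hw pr hpr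
        exact bound pr.1 hstep.1 pr.2 hstep.2.1 hstep.2.2
      · rcases List.mem_cons.1 hpr with rfl | h
        · exact Or.inl (delta_self p M a)
        · simp at h
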